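/- Let R be a reaction network on n species and let R̃ ⊆ R be a subset obtained by removing precisely one reaction of each reversible pair: for every (y, y′) ∈ R, if both (y, y′) ∈ R and (y′, y) ∈ R then exactly one of (y, y′), (y′, y) belongs to R̃, and otherwise (y, y′) ∈ R̃. If the family of reaction vectors (y′ − y), indexed by the reactions (y, y′) ∈ R̃, is linearly independent in ℝⁿ, then δ(R) = 0. -/

import Mathlib

open Finset

noncomputable section

namespace ReactionNetwork

/-- A (candidate) reaction network on `n` species: a finite set of ordered pairs
`(y, y')` of complexes `y, y' ∈ ℕⁿ`. -/
abbrev Rxn (n : ℕ) := Finset ((Fin n → ℕ) × (Fin n → ℕ))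

/-- The set of complexes of a reaction network. -/
def complexes {n : ℕ} (R : Rxn n) : Finset (Fin n → ℕ) :=
  R.image Prod.fst ∪ R.image Prod.snd

/-- The undirected graph on the complexes of `R`, with an edge `{y, y'}` for each
reaction `(y, y') ∈ R`. -/
def linkGraph {n : ℕ} (R : Rxn n) : SimpleGraph {y // y ∈ complexes R} where
  Adj a b := a ≠ b ∧ (((a : Fin n → ℕ), (b : Fin n → ℕ)) ∈ R ∨
    ((b : Fin n → ℕ), (a : Fin n → ℕ)) ∈ R)
  symm := ⟨fun a b h => ⟨h.1.symm, h.2.symm⟩⟩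
  loopless := ⟨fun a h => h.1 rfl⟩

/-- The number of linkage classes of `R`: the number of connected components of
the undirected graph on the complexes. -/
def numLC {n : ℕ} (R : Rxn n) : ℕ :=
  Nat.card (linkGraph R).ConnectedComponent

/-- The dimension of the stoichiometric subspace of `R`. -/
def stoichDim {n : ℕ} (R : Rxn n) : ℕ :=
  Module.finrank ℝ (Submodule.span ℝ
    {d : Fin n → ℝ | ∃ r ∈ R, d = fun i => ((r.2 i : ℝ) - (r.1 i : ℝ))})

/-- The deficiency of a reaction network: `|C(R)| - ℓ(R) - s(R)`. -/
def deficiency {n : ℕ} (R : Rxn n) : ℤ :=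
  (complexes R).card - numLC R - stoichDim R

section Aux
open scoped Classical

variable {n : ℕ} (R : Rxn n)

lemma fst_mem_complexes {r : (Fin n → ℕ) × (Fin n → ℕ)} (h : r ∈ R) : r.1 ∈ complexes R :=
  Finset.mem_union_left _ (Finset.mem_image_of_mem Prod.fst h)
lemma snd_mem_complexes {r : (Fin n → ℕ) × (Fin n → ℕ)} (h : r ∈ R) : r.2 ∈ complexes R :=
  Finset.mem_union_right _ (Finset.mem_image_of_mem Prod.snd h)

/-- vertices -/
abbrev Vx := {y // y ∈ complexes R}

instance : Fintype (linkGraph R).ConnectedComponent := Fintype.ofFinite _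

/-- edge vectors in ℝ^V -/
def edgeVecs : Set (Vx R → ℝ) :=
  {x | ∃ a b : Vx R, (linkGraph R).Adj a b ∧ x = Pi.single b 1 - Pi.single a 1}

def Espan : Submodule ℝ (Vx R → ℝ) := Submodule.span ℝ (edgeVecs R)

lemma single_sub_mem_Espan {a b : Vx R} (h : (linkGraph R).Reachable a b) :
    (Pi.single a 1 - Pi.single b 1 : Vx R → ℝ) ∈ Espan R := by
  obtain ⟨w⟩ := h
  induction w with
  | nil => simp
  | @cons u x v h p ih =>
    have h1 : (Pi.single x 1 - Pi.single u 1 : Vx R → ℝ) ∈ Espan R :=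
      Submodule.subset_span ⟨u, x, h, rfl⟩
    have := Submodule.add_mem _ (Submodule.neg_mem _ h1) ih
    simpa using this

/-- summing over connected components -/
def Qmap : (Vx R → ℝ) →ₗ[ℝ] ((linkGraph R).ConnectedComponent → ℝ) where
  toFun x c := ∑ v ∈ Finset.univ.filter
      (fun v => (linkGraph R).connectedComponentMk v = c), x v
  map_add' x y := by funext c; simp [Finset.sum_add_distrib]
  map_smul' m x := by funext c; simp [Finset.mul_sum]

lemma Qmap_single (v : Vx R) :
    Qmap R (Pi.single v 1) = Pi.single ((linkGraph R).connectedComponentMk v) 1 := by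
  funext c
  simp only [Qmap, LinearMap.coe_mk, AddHom.coe_mk]
  rw [Finset.sum_congr rfl (fun w _ => Pi.single_apply v (1:ℝ) w),
    Finset.sum_ite_eq' _ v (fun _ => (1:ℝ))]
  by_cases h : (linkGraph R).connectedComponentMk v = c
  · simp [h, Pi.single_apply]
  · rw [if_neg (by simp [h]), Pi.single_apply, if_neg (fun hc => h hc.symm)]

lemma Qmap_surj : LinearMap.range (Qmap R) = ⊤ := by
  rw [← top_le_iff, ← (Pi.basisFun ℝ ((linkGraph R).ConnectedComponent)).span_eq,
    Submodule.span_le]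
  rintro _ ⟨c, rfl⟩
  refine ⟨Pi.single c.out 1, ?_⟩
  rw [Qmap_single]
  have : (linkGraph R).connectedComponentMk (Quot.out c) = c := Quot.out_eq c
  rw [this, Pi.basisFun_apply]

end Aux

section Aux2
open scoped Classical
variable {n : ℕ} (R : Rxn n)

lemma Espan_le_ker : Espan R ≤ LinearMap.ker (Qmap R) := by
  rw [Espan, Submodule.span_le]
  rintro _ ⟨a, b, hab, rfl⟩
  have h : (linkGraph R).connectedComponentMk a = (linkGraph R).connectedComponentMk b :=
    SimpleGraph.ConnectedComponent.eq.2 hab.reachable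
  simp only [SetLike.mem_coe, LinearMap.mem_ker, map_sub, Qmap_single, h, sub_self]

lemma finrank_Espan_add_le :
    Module.finrank ℝ (Espan R) + Fintype.card (linkGraph R).ConnectedComponent ≤
      Fintype.card (Vx R) := by
  have hrn := LinearMap.finrank_range_add_finrank_ker (Qmap R)
  rw [Qmap_surj] at hrn
  have h1 : Module.finrank ℝ (Espan R) ≤ Module.finrank ℝ (LinearMap.ker (Qmap R)) :=
    Submodule.finrank_mono (Espan_le_ker R)
  simp only [finrank_top, Module.finrank_fintype_fun_eq_card] at hrn
  omega

/-- representative predicate -/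
def isRep (v : Vx R) : Prop := v = Quot.out ((linkGraph R).connectedComponentMk v)

def repEquiv : {v : Vx R // isRep R v} ≃ (linkGraph R).ConnectedComponent where
  toFun v := (linkGraph R).connectedComponentMk v.val
  invFun c := ⟨Quot.out c, by
    show Quot.out c = Quot.out ((linkGraph R).connectedComponentMk (Quot.out c))
    rw [show (linkGraph R).connectedComponentMk (Quot.out c) = c from Quot.out_eq c]⟩
  left_inv v := Subtype.ext v.prop.symm
  right_inv c := Quot.out_eq c

set_option maxHeartbeats 1000000 in
lemma le_finrank_Espan :
    Fintype.card (Vx R) ≤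
      Module.finrank ℝ (Espan R) + Fintype.card (linkGraph R).ConnectedComponent := by
  -- the family
  have hmem : ∀ v : {v : Vx R // ¬ isRep R v},
      (Pi.single v.val 1 - Pi.single (Quot.out ((linkGraph R).connectedComponentMk v.val)) 1 : Vx R → ℝ)
        ∈ Espan R := by
    intro v
    apply single_sub_mem_Espan
    exact SimpleGraph.ConnectedComponent.eq.1
      (show (linkGraph R).connectedComponentMk v.val =
        (linkGraph R).connectedComponentMk (Quot.out ((linkGraph R).connectedComponentMk v.val)) from
        (Quot.out_eq _).symm)
  set g : {v : Vx R // ¬ isRep R v} → (Vx R → ℝ) :=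
    fun v => Pi.single v.val 1 - Pi.single (Quot.out ((linkGraph R).connectedComponentMk v.val)) 1 with hg
  have hcomp : (LinearMap.funLeft ℝ ℝ (Subtype.val : {v : Vx R // ¬ isRep R v} → Vx R)) ∘ g =
      fun v => Pi.single v 1 := by
    funext v
    funext w
    have h2 : w.val ≠ Quot.out ((linkGraph R).connectedComponentMk v.val) := by
      intro h
      exact w.prop (by rw [isRep, h, show (linkGraph R).connectedComponentMk (Quot.out ((linkGraph R).connectedComponentMk v.val)) = (linkGraph R).connectedComponentMk v.val from Quot.out_eq _])
    simp only [hg, LinearMap.funLeft_apply, Function.comp_apply, Pi.sub_apply]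
    rw [Pi.single_apply, Pi.single_apply, if_neg h2, sub_zero, Pi.single_apply]
    exact if_congr Subtype.val_inj rfl rfl
  have hli : LinearIndependent ℝ g := by
    apply LinearIndependent.of_comp (LinearMap.funLeft ℝ ℝ Subtype.val)
    rw [hcomp]
    have hb : (fun v : {v : Vx R // ¬ isRep R v} => (Pi.single v 1 : {v : Vx R // ¬ isRep R v} → ℝ)) = ⇑(Pi.basisFun ℝ {v : Vx R // ¬ isRep R v}) :=
      funext fun v => (Pi.basisFun_apply ℝ {v : Vx R // ¬ isRep R v} v).symm
    rw [hb]
    exact (Pi.basisFun ℝ {v : Vx R // ¬ isRep R v}).linearIndependent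
  set g' : {v : Vx R // ¬ isRep R v} → (Espan R) := fun v => ⟨g v, hmem v⟩ with hg'
  have hli' : LinearIndependent ℝ g' :=
    LinearIndependent.of_comp (Espan R).subtype (by exact hli)
  have hcard : Fintype.card {v : Vx R // ¬ isRep R v} ≤ Module.finrank ℝ (Espan R) :=
    hli'.fintype_card_le_finrank
  have hpart : Fintype.card {v : Vx R // ¬ isRep R v} + Fintype.card {v : Vx R // isRep R v}
      = Fintype.card (Vx R) := by
    rw [Fintype.card_subtype_compl]
    have := Fintype.card_subtype_le (isRep R)
    omega
  have hrep : Fintype.card {v : Vx R // isRep R v} = Fintype.card (linkGraph R).ConnectedComponent :=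
    Fintype.card_congr (repEquiv R)
  omega

end Aux2

section Aux3
open scoped Classical
variable {n : ℕ} (R Rt : Rxn n)

def Tmap : (Vx R → ℝ) →ₗ[ℝ] (Fin n → ℝ) where
  toFun x i := ∑ v : Vx R, x v * (v.val i : ℝ)
  map_add' x y := by funext i; simp [add_mul, Finset.sum_add_distrib]
  map_smul' m x := by funext i; simp [Finset.mul_sum, mul_assoc]

lemma Tmap_single (v : Vx R) : Tmap R (Pi.single v 1) = fun i => (v.val i : ℝ) := by
  funext i
  simp only [Tmap, LinearMap.coe_mk, AddHom.coe_mk]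
  rw [Finset.sum_congr rfl (fun w _ => by rw [Pi.single_apply, ite_mul, one_mul, zero_mul]),
    Finset.sum_ite_eq' Finset.univ v]
  simp

def Sspan : Submodule ℝ (Fin n → ℝ) := Submodule.span ℝ
  {d : Fin n → ℝ | ∃ r ∈ R, d = fun i => ((r.2 i : ℝ) - (r.1 i : ℝ))}

lemma Sspan_eq_map (hR : ∀ r ∈ R, r.1 ≠ r.2) :
    Sspan R = Submodule.map (Tmap R) (Espan R) := by
  rw [Espan, Submodule.map_span]
  apply le_antisymm
  · rw [Sspan, Submodule.span_le]
    rintro d ⟨r, hr, rfl⟩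
    apply Submodule.subset_span
    refine ⟨Pi.single ⟨r.2, snd_mem_complexes R hr⟩ 1 -
      Pi.single ⟨r.1, fst_mem_complexes R hr⟩ 1,
      ⟨⟨r.1, fst_mem_complexes R hr⟩, ⟨r.2, snd_mem_complexes R hr⟩,
        ⟨fun hc => hR r hr (congrArg Subtype.val hc), Or.inl (by simpa using hr)⟩, rfl⟩, ?_⟩
    rw [map_sub, Tmap_single, Tmap_single]
    funext i
    simp
  · rw [Submodule.span_le]
    rintro _ ⟨_, ⟨a, b, hab, rfl⟩, rfl⟩
    rw [map_sub, Tmap_single, Tmap_single]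
    rcases hab.2 with h | h
    · apply Submodule.subset_span
      exact ⟨(a.val, b.val), h, by funext i; simp⟩
    · have hmem : (fun i => ((a.val i : ℝ) - (b.val i : ℝ))) ∈ Sspan R :=
        Submodule.subset_span ⟨(b.val, a.val), h, rfl⟩
      have := Submodule.neg_mem _ hmem
      rw [SetLike.mem_coe]
      convert this using 1
      funext i
      simp

lemma mem_Rt_or (hpair : ∀ y y' : Fin n → ℕ, (y, y') ∈ R →
      ((y', y) ∈ R → Xor' ((y, y') ∈ Rt) ((y', y) ∈ Rt)) ∧
      ((y', y) ∉ R → (y, y') ∈ Rt)) :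
    ∀ y y', (y, y') ∈ R → (y, y') ∈ Rt ∨ (y', y) ∈ Rt := by
  intro y y' h
  by_cases h' : (y', y) ∈ R
  · rcases ((hpair y y' h).1 h') with ⟨h1, _⟩ | ⟨h1, _⟩
    · exact Or.inl h1
    · exact Or.inr h1
  · exact Or.inl ((hpair y y' h).2 h')

lemma finrank_Espan_le (hsub : Rt ⊆ R)
    (hpair : ∀ y y' : Fin n → ℕ, (y, y') ∈ R →
      ((y', y) ∈ R → Xor' ((y, y') ∈ Rt) ((y', y) ∈ Rt)) ∧
      ((y', y) ∉ R → (y, y') ∈ Rt)) :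
    Module.finrank ℝ (Espan R) ≤ Rt.card := by
  set f : {x // x ∈ Rt} → (Vx R → ℝ) := fun r =>
    Pi.single ⟨r.val.2, snd_mem_complexes R (hsub r.prop)⟩ 1 -
    Pi.single ⟨r.val.1, fst_mem_complexes R (hsub r.prop)⟩ 1 with hf
  have hle : Espan R ≤ Submodule.span ℝ (Set.range f) := by
    rw [Espan, Submodule.span_le]
    rintro _ ⟨a, b, hab, rfl⟩
    have key : ∀ (y y' : Vx R), (y.val, y'.val) ∈ Rt →
        (Pi.single y' 1 - Pi.single y 1 : Vx R → ℝ) ∈ Submodule.span ℝ (Set.range f) := by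
      intro y y' hyy
      apply Submodule.subset_span
      refine ⟨⟨(y.val, y'.val), hyy⟩, ?_⟩
      rfl
    rcases hab.2 with h | h
    · rcases mem_Rt_or R Rt hpair _ _ h with h' | h'
      · exact key a b h'
      · have := Submodule.neg_mem _ (key b a h')
        simpa using this
    · rcases mem_Rt_or R Rt hpair _ _ h with h' | h'
      · have := Submodule.neg_mem _ (key b a h')
        simpa using this
      · exact key a b h'
  calc Module.finrank ℝ (Espan R) ≤ Module.finrank ℝ (Submodule.span ℝ (Set.range f)) :=
        Submodule.finrank_mono hle
    _ ≤ Fintype.card {x // x ∈ Rt} := finrank_range_le_card f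
    _ = Rt.card := Fintype.card_coe Rt

end Aux3


/-- If, after removing precisely one reaction of each reversible
pair, the remaining reaction vectors are linearly independent, then the network
has deficiency zero. -/
theorem deficiency_eq_zero_of_linearIndependent (n : ℕ) (R Rt : Rxn n)
    (hR : ∀ r ∈ R, r.1 ≠ r.2) (hsub : Rt ⊆ R)
    (hpair : ∀ y y' : Fin n → ℕ, (y, y') ∈ R →
      ((y', y) ∈ R → Xor' ((y, y') ∈ Rt) ((y', y) ∈ Rt)) ∧
      ((y', y) ∉ R → (y, y') ∈ Rt))
    (hli : LinearIndependent ℝ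
      (fun r : {x // x ∈ Rt} =>
        (fun i => ((r : (Fin n → ℕ) × (Fin n → ℕ)).2 i : ℝ) -
          ((r : (Fin n → ℕ) × (Fin n → ℕ)).1 i : ℝ) : Fin n → ℝ))) :
    deficiency R = 0 := by
  classical
  have hSmem : ∀ r : {x // x ∈ Rt},
      (fun i => ((r.val.2 i : ℝ) - (r.val.1 i : ℝ))) ∈ Sspan R :=
    fun r => Submodule.subset_span ⟨r.val, hsub r.prop, rfl⟩
  have hli2 : LinearIndependent ℝ
      (fun r : {x // x ∈ Rt} => (⟨fun i => ((r.val.2 i : ℝ) - (r.val.1 i : ℝ)), hSmem r⟩ : Sspan R)) :=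
    LinearIndependent.of_comp (Sspan R).subtype (by exact hli)
  have h1 : Rt.card ≤ Module.finrank ℝ (Sspan R) := by
    rw [← Fintype.card_coe Rt]
    exact hli2.fintype_card_le_finrank
  have h2 : stoichDim R = Module.finrank ℝ (Sspan R) := rfl
  have h3 : Module.finrank ℝ (Sspan R) ≤ Module.finrank ℝ (Espan R) := by
    rw [Sspan_eq_map R hR]
    exact Submodule.finrank_map_le _ _
  have h4 := finrank_Espan_le R Rt hsub hpair
  have h5 := finrank_Espan_add_le R
  have h6 := le_finrank_Espan R
  have h7 : numLC R = Fintype.card (linkGraph R).ConnectedComponent :=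
    Nat.card_eq_fintype_card
  have h8 : (complexes R).card = Fintype.card (Vx R) := (Fintype.card_coe _).symm
  rw [deficiency, h7, h8, h2]
  omega


end ReactionNetwork
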